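/- Let K be a blocking set of PG(n,q) (a set of points meeting every hyperplane) with |K| = q + k + N where N ≥ 1 is the number of points of K on the hyperplane X_n = 0, and with (0,...,0,1,0) ∈ K. If the slope m = (m_0,...,m_{n-2}) defines an (n-2)-dimensional subspace at infinity containing no point of K, then the polynomial X^q − X divides H(X,m), where H is the Rédei polynomial of the affine part U of K. Moreover, if k < q − 1, then H(X,m)/(X^q − X) = f(X,m) where f(X,X̄) = X^k + h_1(X̄)X^{k-1} + ... + h_k(X̄) is formed from the first k+1 coefficients of H, and f(X,m) splits into linear factors over F_q. -/

import Mathlib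

open scoped Classical

noncomputable section

/-- The point set of `PG(n,q)`, `q = p^h`: the projectivization of `F_q^{n+1}`. -/
abbrev PGPoint (p h n : ℕ) [Fact p.Prime] :=
  Projectivization (GaloisField p h) (Fin (n+1) → GaloisField p h)

noncomputable instance (p h n : ℕ) [Fact p.Prime] : Fintype (PGPoint p h n) :=
  @Fintype.ofFinite _ (Quotient.finite _)

/-- The affine coordinates of a point of `PG(n+2,q)` not on the hyperplane at infinity
`X_{n+2} = 0` (obtained by normalizing its last coordinate to `1`). -/
def affCoord (p h n : ℕ) [Fact p.Prime] (P : PGPoint p h (n+2)) (i : Fin (n+2)) :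
    GaloisField p h :=
  P.rep i.castSucc / P.rep (Fin.last (n+2))

/-- The Rédei polynomial `H(X,m)` of the affine part `U` of a point set `K` of
`PG(n+2,q)`, evaluated at a fixed slope `m = (m_0,…,m_n)`: the product over the affine
points `(a_0,…,a_{n+1})` of `K` of `X + a_0 m_0 + ⋯ + a_n m_n - a_{n+1}`. -/
def redeiPoly (p h n : ℕ) [Fact p.Prime] (K : Finset (PGPoint p h (n+2)))
    (m : Fin (n+1) → GaloisField p h) : Polynomial (GaloisField p h) :=
  ∏ P ∈ K.filter (fun P => P.rep (Fin.last (n+2)) ≠ 0),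
    (Polynomial.X + Polynomial.C
      ((∑ i : Fin (n+1), affCoord p h n P i.castSucc * m i)
        - affCoord p h n P (Fin.last (n+1))))

/-- let `K` be a blocking set of `PG(n+2,q)` with `|K| = q + k + N`,
where `N ≥ 1` is the number of points of `K` at infinity, containing the point
`(0,…,0,1,0)`.  If the slope `m` defines an `n`-dimensional subspace at infinity
containing no point of `K`, then `X^q - X` divides `H(X,m)`; moreover, if `k < q-1`,
then `H(X,m) = f(X,m)·(X^q - X)` where `f` is formed from the first `k+1` coefficients
of `H`, and `f(X,m)` splits into linear factors over `F_q`. -/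
theorem stmt1 (p h n k N : ℕ) [Fact p.Prime] (hh : 0 < h)
    (K : Finset (PGPoint p h (n+2)))
    -- K is a blocking set: it meets every hyperplane
    (hbl : ∀ W : Submodule (GaloisField p h) (Fin (n+3) → GaloisField p h),
      Module.finrank (GaloisField p h) W = n + 2 → ∃ P ∈ K, P.submodule ≤ W)
    (hN : 1 ≤ N)
    (hNdef : (K.filter fun P => P.rep (Fin.last (n+2)) = 0).card = N)
    (hcard : K.card = p ^ h + k + N)
    -- (0,…,0,1,0) ∈ K
    (hpt : Projectivization.mk (GaloisField p h)
      (Pi.single ((Fin.last (n+1)).castSucc) (1 : GaloisField p h))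
      (by rw [Function.ne_iff]; exact ⟨(Fin.last (n+1)).castSucc, by simp⟩) ∈ K)
    (m : Fin (n+1) → GaloisField p h)
    -- the (n)-dimensional subspace at infinity defined by the slope m contains
    -- no point of K
    (hslope : ∀ P ∈ K, ¬ (P.rep (Fin.last (n+2)) = 0 ∧
      (∑ i : Fin (n+1), m i * P.rep i.castSucc.castSucc)
        - P.rep (Fin.last (n+1)).castSucc = 0)) :
    (Polynomial.X ^ (p ^ h) - Polynomial.X) ∣ redeiPoly p h n K m ∧
    (k < p ^ h - 1 →
      redeiPoly p h n K m =
        (∑ i ∈ Finset.range (k + 1),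
          Polynomial.C ((redeiPoly p h n K m).coeff (p ^ h + i)) * Polynomial.X ^ i) *
        (Polynomial.X ^ (p ^ h) - Polynomial.X) ∧
      Polynomial.Splits
        (∑ i ∈ Finset.range (k + 1),
          Polynomial.C ((redeiPoly p h n K m).coeff (p ^ h + i)) * Polynomial.X ^ i)) := by
  classical
  letI : Fintype (GaloisField p h) := Fintype.ofFinite _
  set q := p ^ h with hqdef
  have hp2 : 1 < p := (Fact.out : p.Prime).one_lt
  have hq1 : 1 < q := Nat.one_lt_pow hh.ne' hp2
  have hFcard : Fintype.card (GaloisField p h) = q := by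
    rw [← Nat.card_eq_fintype_card]; exact GaloisField.card p h hh.ne'
  set H := redeiPoly p h n K m with hHdef
  have hmono : H.Monic := by
    rw [hHdef, redeiPoly]
    exact Polynomial.monic_prod_of_monic _ _ fun P _ => Polynomial.monic_X_add_C _
  have hHne : H ≠ 0 := hmono.ne_zero
  -- every element of (GaloisField p h) is a root of H
  have hroot : ∀ b : (GaloisField p h), H.eval b = 0 := by
    intro b
    set c : Fin (n+3) → (GaloisField p h) := Fin.snoc (Fin.snoc m (-1)) b with hc
    set φ : (Fin (n+3) → (GaloisField p h)) →ₗ[(GaloisField p h)] (GaloisField p h) := ∑ j, c j • LinearMap.proj j with hφ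
    have hφexp : ∀ x : Fin (n+3) → (GaloisField p h), φ x =
        (∑ i : Fin (n+1), m i * x i.castSucc.castSucc)
          - x (Fin.last (n+1)).castSucc + b * x (Fin.last (n+2)) := by
      intro x
      have : φ x = ∑ j, c j * x j := by
        simp [hφ, LinearMap.sum_apply]
      rw [this, Fin.sum_univ_castSucc, Fin.sum_univ_castSucc]
      simp [hc, Fin.snoc_castSucc, Fin.snoc_last]
      ring
    have hφne : φ ≠ 0 := by
      intro h0
      set e : Fin (n+3) → GaloisField p h :=
        Pi.single ((Fin.last (n+1)).castSucc) 1 with he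
      have h1 := hφexp e
      rw [h0] at h1
      have h2 : ∀ i : Fin (n+1), e i.castSucc.castSucc = 0 := by
        intro i
        apply Pi.single_eq_of_ne
        simp only [ne_eq, Fin.castSucc_inj]
        exact (Fin.castSucc_lt_last i).ne
      have h3 : e (Fin.last (n+2)) = 0 := by
        apply Pi.single_eq_of_ne
        exact (Fin.castSucc_lt_last (Fin.last (n+1))).ne'
      have h4 : e ((Fin.last (n+1)).castSucc) = 1 := Pi.single_eq_same _ _
      rw [Finset.sum_congr rfl (fun i _ => by rw [h2 i, mul_zero])] at h1
      simp only [LinearMap.zero_apply, h3, h4, mul_zero, add_zero] at h1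
      simp at h1
    have hker : Module.finrank (GaloisField p h) (LinearMap.ker φ) = n + 2 := by
      have hrn := LinearMap.finrank_range_add_finrank_ker φ
      have hrange : LinearMap.range φ = ⊤ := by
        rcases eq_bot_or_eq_top (LinearMap.range φ) with h0 | h0
        · exact absurd (LinearMap.range_eq_bot.mp h0) hφne
        · exact h0
      rw [hrange] at hrn
      have hd : Module.finrank (GaloisField p h) (Fin (n+3) → (GaloisField p h)) = n + 3 := by
        simp [Module.finrank_pi]
      have ht : Module.finrank (GaloisField p h) (⊤ : Submodule (GaloisField p h) (GaloisField p h)) = 1 := by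
        simpa using (finrank_top (GaloisField p h) (GaloisField p h)).trans (Module.finrank_self (GaloisField p h))
      rw [hd, ht] at hrn
      omega
    obtain ⟨P, hPK, hPle⟩ := hbl (LinearMap.ker φ) hker
    have hrepmem : P.rep ∈ P.submodule := by
      rw [Projectivization.submodule_eq]
      exact Submodule.mem_span_singleton_self _
    have hφ0 : φ P.rep = 0 := hPle hrepmem
    rw [hφexp] at hφ0
    by_cases hinf : P.rep (Fin.last (n+2)) = 0
    · exfalso
      apply hslope P hPK
      refine ⟨hinf, ?_⟩
      rw [hinf, mul_zero, add_zero] at hφ0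
      exact hφ0
    · rw [hHdef, redeiPoly, Polynomial.eval_prod]
      apply Finset.prod_eq_zero (Finset.mem_filter.mpr ⟨hPK, hinf⟩)
      simp only [Polynomial.eval_add, Polynomial.eval_X, Polynomial.eval_C]
      have hsum : ∑ i : Fin (n+1), affCoord p h n P i.castSucc * m i =
          (∑ i : Fin (n+1), m i * P.rep i.castSucc.castSucc) / P.rep (Fin.last (n+2)) := by
        rw [Finset.sum_div]
        exact Finset.sum_congr rfl fun i _ => by rw [affCoord]; ring
      rw [hsum, affCoord, div_sub_div_same]
      have h5 : (∑ i : Fin (n+1), m i * P.rep i.castSucc.castSucc)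
          - P.rep (Fin.last (n+1)).castSucc
          = -(b * P.rep (Fin.last (n+2))) := by linear_combination hφ0
      rw [h5]
      field_simp
      ring
  -- X^q - X divides H
  have hmonq : (Polynomial.X ^ q - Polynomial.X : Polynomial (GaloisField p h)).Monic := by
    apply Polynomial.monic_X_pow_sub
    rw [Polynomial.degree_X]
    exact_mod_cast hq1
  have hrootsq : (Polynomial.X ^ q - Polynomial.X : Polynomial (GaloisField p h)).roots = Finset.univ.val := by
    rw [← hFcard]
    exact FiniteField.roots_X_pow_card_sub_X (GaloisField p h)
  have hdegq : (Polynomial.X ^ q - Polynomial.X : Polynomial (GaloisField p h)).natDegree = q :=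
    FiniteField.X_pow_card_pow_sub_X_natDegree_eq (GaloisField p h) hh.ne' hp2
  have hsplitq : Polynomial.Splits
      (Polynomial.X ^ q - Polynomial.X : Polynomial (GaloisField p h)) := by
    rw [Polynomial.splits_iff_card_roots, hrootsq, hdegq]
    rw [← Finset.card_def, Finset.card_univ, hFcard]
  have hprodq : (Polynomial.X ^ q - Polynomial.X : Polynomial (GaloisField p h)) =
      ((Polynomial.X ^ q - Polynomial.X : Polynomial (GaloisField p h)).roots.map
        fun a => Polynomial.X - Polynomial.C a).prod :=
    hsplitq.eq_prod_roots_of_monic hmonq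
  have hle : (Polynomial.X ^ q - Polynomial.X : Polynomial (GaloisField p h)).roots ≤ H.roots := by
    rw [hrootsq, Multiset.le_iff_count]
    intro a
    rw [Multiset.count_univ]
    rw [Multiset.one_le_count_iff_mem, Polynomial.mem_roots hHne]
    exact hroot a
  have hdvd : (Polynomial.X ^ q - Polynomial.X : Polynomial (GaloisField p h)) ∣ H := by
    rw [hprodq]
    exact dvd_trans (Multiset.prod_dvd_prod_of_le (Multiset.map_le_map hle))
      (Polynomial.prod_multiset_X_sub_C_dvd H)
  refine ⟨hdvd, fun hk => ?_⟩
  obtain ⟨g, hg⟩ := hdvd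
  have hqXne : (Polynomial.X ^ q - Polynomial.X : Polynomial (GaloisField p h)) ≠ 0 := hmonq.ne_zero
  have hgne : g ≠ 0 := by
    intro h0; rw [h0, mul_zero] at hg; exact hHne hg
  -- degree of H
  have hUcard : (K.filter fun P => P.rep (Fin.last (n+2)) ≠ 0).card = q + k := by
    have := Finset.card_filter_add_card_filter_not
      (s := K) (p := fun P => P.rep (Fin.last (n+2)) = 0)
    simp only [hNdef] at this
    have h2 : (K.filter fun P => ¬ P.rep (Fin.last (n+2)) = 0).card
        = (K.filter fun P => P.rep (Fin.last (n+2)) ≠ 0).card := rfl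
    omega
  have hHdeg : H.natDegree = q + k := by
    rw [hHdef, redeiPoly, Polynomial.natDegree_prod _ _
      (fun P _ => Polynomial.X_add_C_ne_zero _)]
    simp only [Polynomial.natDegree_X_add_C]
    rw [Finset.sum_const, smul_eq_mul, mul_one, hUcard]
  have hgdeg : g.natDegree = k := by
    have := Polynomial.natDegree_mul hqXne hgne
    rw [← hg, hHdeg, hdegq] at this
    omega
  have hcoeff : ∀ i ∈ Finset.range (k+1), H.coeff (q + i) = g.coeff i := by
    intro i hi
    rw [Finset.mem_range] at hi
    have h1 : H = Polynomial.X ^ q * g - Polynomial.X * g := by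
      rw [hg]; ring
    rw [h1, Polynomial.coeff_sub]
    have h2 : (Polynomial.X ^ q * g).coeff (q + i) = g.coeff i := by
      rw [add_comm, Polynomial.coeff_X_pow_mul]
    have h3 : (Polynomial.X * g).coeff (q + i) = g.coeff (q + i - 1) := by
      have : q + i = (q + i - 1) + 1 := by omega
      rw [this, Polynomial.coeff_X_mul]
      simp
    have h4 : g.coeff (q + i - 1) = 0 := by
      apply Polynomial.coeff_eq_zero_of_natDegree_lt
      rw [hgdeg]; omega
    rw [h2, h3, h4, sub_zero]
  have hfg : (∑ i ∈ Finset.range (k + 1),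
      Polynomial.C (H.coeff (q + i)) * Polynomial.X ^ i) = g := by
    rw [Finset.sum_congr rfl fun i hi => by rw [hcoeff i hi]]
    conv_rhs => rw [g.as_sum_range' (k+1) (by omega)]
    exact Finset.sum_congr rfl fun i _ => Polynomial.C_mul_X_pow_eq_monomial
  have hHsplit : Polynomial.Splits H := by
    rw [hHdef, redeiPoly]
    apply Polynomial.Splits.prod
    intro P _
    apply Polynomial.Splits.of_natDegree_le_one
    rw [Polynomial.natDegree_X_add_C]
  constructor
  · rw [hfg, hg]; ring
  · rw [hfg]
    exact Polynomial.Splits.of_dvd hHsplit hHne ⟨_, hg.trans (mul_comm _ _)⟩
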